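/- Let p, q > 0 be coprime integers. Then det( Σ_{j=0}^{p−1} A_p^{jq} ) = (1 − t^q)^{p−1} in ℂ[t], where A_p^0 = I. -/

import Mathlib

/-- The `p × p` matrix `A_p` over `ℂ[t]` with `(i, i+1)` entries equal to `1` for
`0 ≤ i ≤ p-2`, `(p-1, 0)` entry equal to `t`, and all other entries `0`. -/
noncomputable def Ap (p : ℕ) : Matrix (Fin p) (Fin p) (Polynomial ℂ) :=
  Matrix.of fun i j =>
    if (i : ℕ) + 1 = (j : ℕ) then 1
    else if (i : ℕ) = p - 1 ∧ (j : ℕ) = 0 then Polynomial.X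
    else 0

open Polynomial Matrix in
/-- The weighted shift-by-`k` matrix over `ZMod p`. -/
noncomputable def Bz (p k : ℕ) : Matrix (ZMod p) (ZMod p) (Polynomial ℂ) :=
  Matrix.of fun i j => if j = i + (k : ZMod p) then (X : Polynomial ℂ) ^ ((ZMod.val i + k) / p) else 0

/-- The natural equivalence `Fin p ≃ ZMod p`. -/
def zfe (p : ℕ) [NeZero p] : Fin p ≃ ZMod p where
  toFun i := (i : ℕ)
  invFun x := ⟨x.val, ZMod.val_lt x⟩
  left_inv i := by simp [ZMod.val_natCast_of_lt i.isLt]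
  right_inv x := by simp [ZMod.natCast_rightInverse x]

section Aux
open Polynomial Matrix

lemma val_aux (p : ℕ) [NeZero p] (i : ZMod p) (k : ℕ) :
    ZMod.val (i + (k : ZMod p)) = (ZMod.val i + k) % p := by
  rw [ZMod.val_add, ZMod.val_natCast, Nat.add_mod, Nat.mod_mod_of_dvd, ← Nat.add_mod]
  exact dvd_refl p

lemma exp_aux (p : ℕ) (hp : 0 < p) (a : ℕ) : a / p + (a % p + 1) / p = (a + 1) / p := by
  conv_rhs => rw [← Nat.div_add_mod a p]
  rw [add_assoc, Nat.mul_add_div hp]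

lemma Bz_zero (p : ℕ) [NeZero p] : Bz p 0 = 1 := by
  refine Matrix.ext fun i j => ?_
  simp [Bz, Matrix.one_apply, Nat.div_eq_of_lt (ZMod.val_lt i), eq_comm]

lemma Bz_mul (p : ℕ) [NeZero p] (k : ℕ) : Bz p k * Bz p 1 = Bz p (k + 1) := by
  refine Matrix.ext fun i j => ?_
  rw [Matrix.mul_apply]
  rw [Finset.sum_eq_single (i + (k : ZMod p))]
  · simp only [Bz, Matrix.of_apply, Nat.cast_one, Nat.cast_add, ← add_assoc, if_pos rfl,
      if_true, eq_self_iff_true]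
    by_cases h : j = i + (k : ZMod p) + 1
    · rw [if_pos h, if_pos h, ← pow_add]
      congr 1
      rw [val_aux, exp_aux p (NeZero.pos p)]
    · rw [if_neg h, if_neg h, mul_zero]
  · intro b _ hb
    simp only [Bz, Matrix.of_apply]
    rw [if_neg (fun hc => hb hc), zero_mul]
  · simp

lemma Bz_pow (p : ℕ) [NeZero p] (k : ℕ) : (Bz p 1) ^ k = Bz p k := by
  induction k with
  | zero => rw [pow_zero, Bz_zero]
  | succ n ih => rw [pow_succ, ih, Bz_mul]

lemma Bz_p (p : ℕ) [NeZero p] : Bz p p = (X : Polynomial ℂ) • 1 := by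
  refine Matrix.ext fun i j => ?_
  have hi := ZMod.val_lt i
  simp only [Bz, Matrix.of_apply, ZMod.natCast_self, add_zero, Matrix.smul_apply,
    Matrix.one_apply, Nat.add_div_right _ (NeZero.pos p), Nat.div_eq_of_lt hi,
    zero_add, pow_one, smul_eq_mul, eq_comm (a := j)]
  split <;> simp

lemma reindex_Ap (p : ℕ) [NeZero p] :
    Matrix.reindex (zfe p) (zfe p) (Ap p) = Bz p 1 := by
  refine Matrix.ext fun i j => ?_
  have hp := NeZero.pos p
  have hi := ZMod.val_lt i
  have hj := ZMod.val_lt j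
  have hcond : (j = i + ((1 : ℕ) : ZMod p)) ↔ ZMod.val j = (ZMod.val i + 1) % p := by
    constructor
    · intro h; rw [h, val_aux]
    · intro h
      have := val_aux p i 1
      exact ZMod.val_injective _ (by rw [this, ← h])
  have hmod : (ZMod.val i + 1) % p = ZMod.val i + 1 ∨
      (ZMod.val i + 1 = p ∧ (ZMod.val i + 1) % p = 0) := by
    rcases lt_or_eq_of_le (Nat.succ_le_of_lt hi) with h | h
    · exact Or.inl (Nat.mod_eq_of_lt h)
    · exact Or.inr ⟨h, by rw [show ZMod.val i + 1 = p from h, Nat.mod_self]⟩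
  have hlt : (ZMod.val i + 1) % p < p := Nat.mod_lt _ hp
  simp only [Matrix.reindex_apply, Matrix.submatrix_apply, Ap, Bz, Matrix.of_apply]
  show (if ZMod.val i + 1 = ZMod.val j then 1
      else if ZMod.val i = p - 1 ∧ ZMod.val j = 0 then X else 0) = _
  by_cases h : ZMod.val i + 1 = ZMod.val j
  · rw [if_pos h, if_pos (hcond.mpr (by omega)), Nat.div_eq_of_lt (by omega), pow_zero]
  · rw [if_neg h]
    by_cases h2 : ZMod.val i = p - 1 ∧ ZMod.val j = 0
    · rw [if_pos h2, if_pos (hcond.mpr (by omega))]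
      have : (ZMod.val i + 1) / p = 1 := by
        have h3 : ZMod.val i + 1 = p := by omega
        rw [h3, Nat.div_self hp]
      rw [this, pow_one]
    · rw [if_neg h2, if_neg]
      intro hc
      have := hcond.mp hc
      omega

lemma sum_aux (p q : ℕ) (hp : 0 < p) : ∑ v ∈ Finset.range p, (v + q) / p = q := by
  have h1 : ∀ v ∈ Finset.range p, (v + q) / p = q / p + (v + q % p) / p := by
    intro v _
    conv_lhs => rw [← Nat.div_add_mod q p]
    rw [← add_assoc, add_comm v, add_assoc, Nat.mul_add_div hp]
  rw [Finset.sum_congr rfl h1, Finset.sum_add_distrib, Finset.sum_const, Finset.card_range,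
    smul_eq_mul]
  have hr : q % p < p := Nat.mod_lt _ hp
  have h2 : ∀ v ∈ Finset.range p, (v + q % p) / p = if p ≤ v + q % p then 1 else 0 := by
    intro v hv
    rw [Finset.mem_range] at hv
    by_cases h : p ≤ v + q % p
    · rw [if_pos h, Nat.div_eq_sub_div hp h, Nat.div_eq_of_lt (by omega)]
    · rw [if_neg h, Nat.div_eq_of_lt (by omega)]
  rw [Finset.sum_congr rfl h2, Finset.sum_ite, Finset.sum_const, Finset.sum_const]
  have h3 : Finset.filter (fun v => p ≤ v + q % p) (Finset.range p) = Finset.Ico (p - q % p) p := by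
    ext v
    simp only [Finset.mem_filter, Finset.mem_range, Finset.mem_Ico]
    omega
  rw [h3, Nat.card_Ico]
  have h4 := Nat.div_add_mod q p
  simp only [smul_eq_mul, mul_one, mul_zero, add_zero]
  omega

lemma subRight_pow (p : ℕ) (c : ZMod p) (k : ℕ) (x : ZMod p) :
    ((Equiv.subRight c) ^ k) x = x - (k : ℕ) • c := by
  induction k with
  | zero => simp
  | succ n ih =>
    rw [pow_succ', Equiv.Perm.mul_apply, ih, succ_nsmul, Equiv.subRight_apply, sub_sub,
      add_comm (n • c) c, ← sub_sub]

lemma reach (p q : ℕ) [NeZero p] (hu : IsUnit ((q : ℕ) : ZMod p)) (i₀ j : ZMod p) :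
    ∃ k : ℕ, j = i₀ - (k : ZMod p) * (q : ZMod p) := by
  obtain ⟨u, hu⟩ := hu
  refine ⟨((i₀ - j) * ↑u⁻¹).val, ?_⟩
  rw [ZMod.natCast_val, ZMod.cast_id, ← hu, mul_assoc, Units.inv_mul, mul_one, sub_sub_cancel]

lemma perm_eq (p q : ℕ) [NeZero p] (hq0 : ((q : ℕ) : ZMod p) ≠ 0)
    (hu : IsUnit ((q : ℕ) : ZMod p)) (τ : Equiv.Perm (ZMod p))
    (hτ : ∀ i, τ i = i ∨ τ i = i - (q : ZMod p)) (hne : τ ≠ 1) :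
    τ = Equiv.subRight ((q : ℕ) : ZMod p) := by
  have hstep : ∀ i : ZMod p, τ i = i - q → τ (i - q) = i - q - q := by
    intro i hi
    rcases hτ (i - q) with h | h
    · exact absurd (sub_eq_self.mp (τ.injective (by rw [hi, h]))) hq0
    · exact h
  obtain ⟨i₀, hi₀⟩ : ∃ i, τ i ≠ i := by
    by_contra hc
    push_neg at hc
    exact hne (Equiv.ext fun x => by rw [hc x, Equiv.Perm.one_apply])
  have h0 : τ i₀ = i₀ - q := (hτ i₀).resolve_left hi₀
  have hk : ∀ k : ℕ, τ (i₀ - (k : ZMod p) * q) = i₀ - (k : ZMod p) * q - q := by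
    intro k
    induction k with
    | zero => simpa using h0
    | succ n ih =>
      have h2 := hstep _ ih
      have h3 : i₀ - (n : ZMod p) * q - q = i₀ - ((n + 1 : ℕ) : ZMod p) * q := by
        push_cast; ring
      rw [h3] at h2
      exact h2
  refine Equiv.ext fun j => ?_
  obtain ⟨k, rfl⟩ := reach p q hu i₀ j
  rw [hk k, Equiv.subRight_apply]

lemma det_Bz_sub_one (p q : ℕ) [NeZero p] (hq0 : ((q : ℕ) : ZMod p) ≠ 0)
    (hu : IsUnit ((q : ℕ) : ZMod p)) :
    (Bz p q - 1).det = (-1) ^ p * (1 - (X : Polynomial ℂ) ^ q) := by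
  set σ : Equiv.Perm (ZMod p) := Equiv.subRight ((q : ℕ) : ZMod p) with hσ
  set M : Matrix (ZMod p) (ZMod p) (Polynomial ℂ) := Bz p q - 1 with hM
  have hMab : ∀ a b, M a b =
      (if b = a + (q : ZMod p) then (X : Polynomial ℂ) ^ ((ZMod.val a + q) / p) else 0)
        - (if a = b then 1 else 0) := by
    intro a b
    simp [hM, Bz, Matrix.sub_apply, Matrix.one_apply]
  have hσ1 : (1 : Equiv.Perm (ZMod p)) ≠ σ := by
    intro hc
    have := congrArg (fun τ : Equiv.Perm (ZMod p) => τ 0) hc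
    simp only [Equiv.Perm.one_apply, hσ, Equiv.subRight_apply, zero_sub] at this
    exact hq0 (neg_eq_zero.mp this.symm)
  have prod_id : ∏ i : ZMod p, M i i = (-1 : Polynomial ℂ) ^ p := by
    have : ∀ i : ZMod p, M i i = -1 := by
      intro i
      rw [hMab, if_neg (fun hc => hq0 (left_eq_add.mp hc)), if_pos rfl, zero_sub]
    rw [Finset.prod_congr rfl (fun i _ => this i), Finset.prod_const, Finset.card_univ,
      ZMod.card]
  have prod_σ : ∏ i : ZMod p, M (σ i) i = (X : Polynomial ℂ) ^ q := by
    have h1 : ∀ i : ZMod p, M (σ i) i =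
        (X : Polynomial ℂ) ^ ((ZMod.val (i - (q : ZMod p)) + q) / p) := by
      intro i
      rw [hMab]
      rw [hσ]
      simp only [Equiv.subRight_apply]
      rw [if_pos (by rw [sub_add_cancel]), if_neg (fun hc => hq0 (sub_eq_self.mp hc)), sub_zero]
    rw [Finset.prod_congr rfl (fun i _ => h1 i), Finset.prod_pow_eq_pow_sum]
    congr 1
    have h2 : ∑ i : ZMod p, (ZMod.val (i - (q : ZMod p)) + q) / p
        = ∑ i : ZMod p, (ZMod.val i + q) / p :=
      Equiv.sum_comp (Equiv.subRight ((q : ℕ) : ZMod p)) (fun i => (ZMod.val i + q) / p)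
    rw [h2, ← Equiv.sum_comp (zfe p) (fun i : ZMod p => (ZMod.val i + q) / p)]
    have h3 : ∀ i : Fin p, ZMod.val (zfe p i) = (i : ℕ) := fun i =>
      ZMod.val_natCast_of_lt i.isLt
    rw [Finset.sum_congr rfl (fun i _ => by rw [h3 i])]
    rw [Fin.sum_univ_eq_sum_range (fun v => (v + q) / p), sum_aux p q (NeZero.pos p)]
  have hcyc : σ.IsCycle := by
    refine ⟨0, ?_, fun y hy => ?_⟩
    · rw [hσ, Equiv.subRight_apply, zero_sub]
      exact fun hc => hq0 (neg_eq_zero.mp hc)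
    · obtain ⟨k, hk⟩ := reach p q hu 0 y
      refine ⟨(k : ℤ), ?_⟩
      rw [zpow_natCast, hσ, subRight_pow, hk, zero_sub, nsmul_eq_mul, zero_sub]
  have hsupp : σ.support = Finset.univ := by
    ext x
    simp only [Equiv.Perm.mem_support, Finset.mem_univ, iff_true, hσ, Equiv.subRight_apply]
    exact fun hc => hq0 (sub_eq_self.mp hc)
  have hsign : Equiv.Perm.sign σ = -(-1) ^ p := by
    rw [hcyc.sign, hsupp, Finset.card_univ, ZMod.card]
  rw [Matrix.det_apply]
  rw [← Finset.sum_subset (Finset.subset_univ ({1, σ} : Finset (Equiv.Perm (ZMod p))))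
    (fun τ _ hτ => ?_)]
  · rw [Finset.sum_pair hσ1]
    simp only [Equiv.Perm.one_apply]
    rw [prod_id, hsign, prod_σ, Equiv.Perm.sign_one, one_smul,
      Units.smul_def]
    simp only [Units.smul_def, Units.val_neg, Units.val_pow_eq_pow_val, Units.val_neg,
      Units.val_one, zsmul_eq_mul]
    push_cast
    ring
  · simp only [Finset.mem_insert, Finset.mem_singleton, not_or] at hτ
    obtain ⟨hτ1, hτσ⟩ := hτ
    have hnall : ¬ ∀ i, τ i = i ∨ τ i = i - ((q : ℕ) : ZMod p) := fun hall =>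
      hτσ (perm_eq p q hq0 hu τ hall hτ1)
    push_neg at hnall
    obtain ⟨i, hi1, hi2⟩ := hnall
    rw [Finset.prod_eq_zero (Finset.mem_univ i), smul_zero]
    rw [hMab]
    rw [if_neg (fun hc => hi2 (eq_sub_iff_add_eq.mpr hc.symm)),
      if_neg (fun hc => hi1 hc), sub_zero]

end Aux

open Polynomial Matrix in
/-- For coprime `p, q > 0`, `det(Σ_{j=0}^{p-1} A_p^{jq}) = (1 - t^q)^{p-1}` in `ℂ[t]`. -/
theorem det_sum_pow_Ap (p q : ℕ) (hp : 0 < p) (hq : 0 < q) (hpq : Nat.Coprime p q) :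
    (∑ j ∈ Finset.range p, (Ap p) ^ (j * q)).det =
      (1 - (Polynomial.X : Polynomial ℂ) ^ q) ^ (p - 1) := by
  rcases eq_or_lt_of_le (Nat.succ_le_of_lt hp) with h1 | h1
  · rw [← h1]
    simp
  · haveI : NeZero p := ⟨by omega⟩
    have hq0 : ((q : ℕ) : ZMod p) ≠ 0 := by
      rw [Ne, ZMod.natCast_eq_zero_iff]
      intro hdvd
      have := Nat.Coprime.eq_one_of_dvd hpq hdvd
      omega
    have hu : IsUnit ((q : ℕ) : ZMod p) :=
      ⟨ZMod.unitOfCoprime q hpq.symm, ZMod.coe_unitOfCoprime q hpq.symm⟩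
    set C : Matrix (ZMod p) (ZMod p) (Polynomial ℂ) := Bz p 1 with hC
    have htrans : (∑ j ∈ Finset.range p, (Ap p) ^ (j * q)).det
        = (∑ j ∈ Finset.range p, (C ^ q) ^ j).det := by
      rw [← Matrix.det_reindex_self (zfe p) (∑ j ∈ Finset.range p, (Ap p) ^ (j * q))]
      congr 1
      have : Matrix.reindex (zfe p) (zfe p) (∑ j ∈ Finset.range p, (Ap p) ^ (j * q))
          = Matrix.reindexAlgEquiv (Polynomial ℂ) (Polynomial ℂ) (zfe p)
            (∑ j ∈ Finset.range p, (Ap p) ^ (j * q)) := rfl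
      rw [this, map_sum]
      refine Finset.sum_congr rfl fun j _ => ?_
      rw [map_pow]
      have hA : Matrix.reindexAlgEquiv (Polynomial ℂ) (Polynomial ℂ) (zfe p) (Ap p) = C :=
        reindex_Ap p
      rw [hA, mul_comm j q, pow_mul]
    rw [htrans]
    have hgeom := geom_sum_mul (C ^ q) p
    have hCp : (C ^ q) ^ p = (X : Polynomial ℂ) ^ q • 1 := by
      rw [← pow_mul, mul_comm q p, pow_mul, hC, Bz_pow, Bz_p, _root_.smul_pow, one_pow]
    have hsub : (X : Polynomial ℂ) ^ q • (1 : Matrix (ZMod p) (ZMod p) (Polynomial ℂ)) - 1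
        = ((X : Polynomial ℂ) ^ q - 1) • 1 := by
      rw [sub_smul, one_smul]
    rw [hCp, hsub] at hgeom
    have hdetmul := congrArg Matrix.det hgeom
    rw [Matrix.det_mul, Matrix.det_smul, Matrix.det_one, mul_one, ZMod.card] at hdetmul
    have hCq : C ^ q - 1 = Bz p q - 1 := by rw [hC, Bz_pow]
    rw [hCq, det_Bz_sub_one p q hq0 hu] at hdetmul
    have hne : (1 : Polynomial ℂ) - X ^ q ≠ 0 := by
      intro hcon
      have h2 : ((X : Polynomial ℂ) ^ q) = 1 := by linear_combination -hcon
      have := congrArg natDegree h2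
      rw [natDegree_X_pow, natDegree_one] at this
      omega
    have hc : ((-1 : Polynomial ℂ) ^ p * (1 - X ^ q)) ≠ 0 := by
      apply mul_ne_zero _ hne
      exact pow_ne_zero _ (by norm_num)
    apply mul_right_cancel₀ hc
    rw [hdetmul]
    have hp1 : p = (p - 1) + 1 := by omega
    calc ((X : Polynomial ℂ) ^ q - 1) ^ p
        = ((-1) * (1 - X ^ q)) ^ p := by rw [neg_one_mul, neg_sub]
      _ = (1 - (X : Polynomial ℂ) ^ q) ^ (p - 1) * ((-1) ^ p * (1 - X ^ q)) := by
          have hsplit : (1 - (X : Polynomial ℂ) ^ q) ^ p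
              = (1 - X ^ q) ^ (p - 1) * (1 - X ^ q) := by
            conv_lhs => rw [hp1]
            rw [pow_succ]
          rw [mul_pow, hsplit]
          ring
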